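/- Let A be a finite elementary abelian p-group, ℓ coprime to p, and M a (ℤ/ℓℤ)[A]-module such that the coinvariants M_A = M/I_A·M are trivial. Then M decomposes as a direct sum M = ⊕_i ε_i M, where the sum runs over all index-p subgroups A_i of A and ε_i = (1/|A_i|)Σ_{a∈A_i} a. -/

import Mathlib

/-- The averaging idempotent `ε_B = (1/|B|) Σ_{a ∈ B} a` in the group algebra
`(ℤ/ℓℤ)[A]` attached to a subgroup `B` of a finite additive group `A`. -/
noncomputable def eps (ℓ : ℕ) {A : Type*} [AddCommGroup A] [Finite A]
    (B : AddSubgroup A) : AddMonoidAlgebra (ZMod ℓ) A :=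
  haveI : Fintype B := Fintype.ofFinite B
  (Nat.card B : ZMod ℓ)⁻¹ • ∑ a : B, AddMonoidAlgebra.single (a : A) (1 : ZMod ℓ)

/-- The augmentation ideal `I_A ⊆ (ℤ/ℓℤ)[A]`, generated by the elements `σ - 1`. -/
noncomputable def augIdeal (ℓ : ℕ) (A : Type*) [AddCommGroup A] :
    Ideal (AddMonoidAlgebra (ZMod ℓ) A) :=
  Ideal.span {x | ∃ σ : A, x = AddMonoidAlgebra.single σ 1 - 1}

open AddMonoidAlgebra Finset

section GA
variable {ℓ : ℕ} {A : Type*} [AddCommGroup A] [Finite A]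

local notation "R" => AddMonoidAlgebra (ZMod ℓ) A

/-- sum of singles over a subgroup -/
noncomputable def gsum (ℓ : ℕ) {A : Type*} [AddCommGroup A] [Finite A] (B : AddSubgroup A) : AddMonoidAlgebra (ZMod ℓ) A :=
  haveI : Fintype B := Fintype.ofFinite B
  ∑ a : B, AddMonoidAlgebra.single (a : A) (1 : ZMod ℓ)

lemma eps_eq (B : AddSubgroup A) : eps ℓ B = (Nat.card B : ZMod ℓ)⁻¹ • gsum ℓ B := rfl

lemma gsum_eq (B : AddSubgroup A) [Fintype B] :
    gsum ℓ B = ∑ a : B, AddMonoidAlgebra.single (a : A) (1 : ZMod ℓ) := by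
  unfold gsum
  congr!

lemma single_mul_gsum (B : AddSubgroup A) {b : A} (hb : b ∈ B) :
    AddMonoidAlgebra.single b (1 : ZMod ℓ) * gsum ℓ B = gsum ℓ B := by
  haveI : Fintype B := Fintype.ofFinite B
  rw [gsum_eq, Finset.mul_sum]
  simp only [AddMonoidAlgebra.single_mul_single, one_mul]
  exact Fintype.sum_equiv (Equiv.addLeft (⟨b, hb⟩ : B)) _ _ (fun x => rfl)

lemma gsum_apply_mem (B : AddSubgroup A) {a : A} (h : a ∈ B) :
    (gsum ℓ B).coeff a = 1 := by
  haveI : Fintype B := Fintype.ofFinite B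
  classical
  rw [gsum_eq, AddMonoidAlgebra.coeff_sum, Finsupp.finset_sum_apply]
  simp only [AddMonoidAlgebra.coeff_single_apply]
  rw [Finset.sum_eq_single (⟨a, h⟩ : B)]
  · simp
  · intro b _ hne
    rw [if_neg]
    exact fun e => hne (Subtype.ext e)
  · simp

lemma gsum_apply_not_mem (B : AddSubgroup A) {a : A} (h : a ∉ B) :
    (gsum ℓ B).coeff a = 0 := by
  haveI : Fintype B := Fintype.ofFinite B
  classical
  rw [gsum_eq, AddMonoidAlgebra.coeff_sum, Finsupp.finset_sum_apply]
  simp only [AddMonoidAlgebra.coeff_single_apply]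
  rw [Finset.sum_eq_zero]
  intro b _
  rw [if_neg]
  exact fun e => h (e ▸ b.2)

lemma single_zero_mul (c : ZMod ℓ) (f : AddMonoidAlgebra (ZMod ℓ) A) :
    AddMonoidAlgebra.single (0 : A) c * f = c • f := by
  ext x
  rw [AddMonoidAlgebra.coeff_single_zero_mul, AddMonoidAlgebra.coeff_smul_apply, smul_eq_mul]

lemma gsum_top [Fintype A] : gsum ℓ (⊤ : AddSubgroup A) = ∑ a : A, AddMonoidAlgebra.single a (1 : ZMod ℓ) := by
  haveI : Fintype (⊤ : AddSubgroup A) := Fintype.ofFinite _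
  rw [gsum_eq]
  exact Fintype.sum_equiv AddSubgroup.topEquiv.toEquiv _ _ (fun x => rfl)

lemma gsum_mul_gsum_of_sup_eq_top [Fintype A] {B C : AddSubgroup A} (h : B ⊔ C = ⊤) :
    ∃ k : ℕ, k * Nat.card A = Nat.card B * Nat.card C ∧
      gsum ℓ B * gsum ℓ C = (k : ZMod ℓ) • gsum ℓ (⊤ : AddSubgroup A) := by
  classical
  haveI : Fintype B := Fintype.ofFinite B
  haveI : Fintype C := Fintype.ofFinite C
  set k : ℕ := (Finset.univ.filter (fun z : B × C => (z.1 : A) + (z.2 : A) = 0)).card with hk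
  -- every fiber has cardinality k
  have hfiber : ∀ a : A,
      (Finset.univ.filter (fun z : B × C => (z.1 : A) + (z.2 : A) = a)).card = k := by
    intro a
    have ha : a ∈ B ⊔ C := h ▸ AddSubgroup.mem_top a
    obtain ⟨y, hy, z, hz, hyz⟩ := AddSubgroup.mem_sup.mp ha
    rw [hk]
    apply Finset.card_nbij' (i := fun w => (w.1 - ⟨y, hy⟩, w.2 - ⟨z, hz⟩))
      (j := fun w => (w.1 + ⟨y, hy⟩, w.2 + ⟨z, hz⟩))
    · intro w hw
      simp only [Finset.coe_filter, Finset.mem_coe, Set.mem_setOf_eq, Finset.mem_filter, Finset.mem_univ, true_and] at hw ⊢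
      push_cast
      rw [sub_add_sub_comm, hw, hyz, sub_self]
    · intro w hw
      simp only [Finset.coe_filter, Finset.mem_coe, Set.mem_setOf_eq, Finset.mem_filter, Finset.mem_univ, true_and] at hw ⊢
      push_cast
      have : (w.1 : A) + (w.2 : A) = 0 := hw
      rw [add_add_add_comm, this, hyz, zero_add]
    · intro w _; simp
    · intro w _; simp
  have hcard : k * Nat.card A = Nat.card B * Nat.card C := by
    have := Finset.card_eq_sum_card_fiberwise
      (f := fun z : B × C => (z.1 : A) + (z.2 : A)) (s := Finset.univ) (t := Finset.univ)
      (fun x _ => Finset.mem_univ _)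
    simp only [hfiber, Finset.sum_const, Finset.card_univ, smul_eq_mul] at this
    rw [Nat.card_eq_fintype_card, Nat.card_eq_fintype_card, Nat.card_eq_fintype_card]
    rw [← Fintype.card_prod, this, mul_comm]
  refine ⟨k, hcard, ?_⟩
  rw [gsum_eq, gsum_eq, gsum_top, Finset.sum_mul_sum]
  simp only [AddMonoidAlgebra.single_mul_single, one_mul]
  rw [← Finset.sum_product', Finset.univ_product_univ, Finset.smul_sum]
  rw [← Finset.sum_fiberwise_of_maps_to (g := fun z : B × C => (z.1 : A) + (z.2 : A))
    (t := Finset.univ) (fun x _ => Finset.mem_univ _)]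
  refine Finset.sum_congr rfl (fun a _ => ?_)
  have h1 : ∑ z ∈ Finset.univ.filter (fun z : B × C => (z.1 : A) + (z.2 : A) = a),
      AddMonoidAlgebra.single ((z.1 : A) + (z.2 : A)) (1 : ZMod ℓ)
      = ∑ _z ∈ Finset.univ.filter (fun z : B × C => (z.1 : A) + (z.2 : A) = a),
      AddMonoidAlgebra.single a (1 : ZMod ℓ) := by
    refine Finset.sum_congr rfl (fun z hz => ?_)
    simp only [Finset.mem_filter] at hz
    rw [hz.2]
  rw [h1, Finset.sum_const, hfiber a, Nat.cast_smul_eq_nsmul]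

lemma gsum_mul_gsum_self (B : AddSubgroup A) :
    gsum ℓ B * gsum ℓ B = (Nat.card B : ZMod ℓ) • gsum ℓ B := by
  haveI : Fintype B := Fintype.ofFinite B
  nth_rewrite 1 [gsum_eq]
  rw [Finset.sum_mul]
  rw [Finset.sum_congr rfl (fun b _ => single_mul_gsum B b.2), Finset.sum_const,
    Finset.card_univ, ← Nat.card_eq_fintype_card, Nat.cast_smul_eq_nsmul]

lemma eps_mul_eps_self (B : AddSubgroup A) (hB : IsUnit (Nat.card B : ZMod ℓ)) :
    eps ℓ B * eps ℓ B = eps ℓ B := by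
  rw [eps_eq, smul_mul_assoc, mul_smul_comm, gsum_mul_gsum_self, smul_smul, smul_smul,
    mul_assoc, ZMod.inv_mul_of_unit _ hB, mul_one]

lemma eps_mul_eps_of_sup_eq_top [Fintype A] {B C : AddSubgroup A} (h : B ⊔ C = ⊤)
    (hB : IsUnit (Nat.card B : ZMod ℓ)) (hC : IsUnit (Nat.card C : ZMod ℓ))
    (hA : IsUnit (Nat.card A : ZMod ℓ)) :
    eps ℓ B * eps ℓ C = eps ℓ (⊤ : AddSubgroup A) := by
  obtain ⟨k, hcard, hmul⟩ := gsum_mul_gsum_of_sup_eq_top (ℓ := ℓ) h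
  have hAtop : (Nat.card (⊤ : AddSubgroup A)) = Nat.card A := by
    rw [← AddSubgroup.card_top (G := A)]
  rw [eps_eq, eps_eq, smul_mul_assoc, mul_smul_comm, hmul, eps_eq, hAtop, smul_smul, smul_smul]
  congr 1
  have hu : IsUnit ((Nat.card B : ZMod ℓ) * (Nat.card C : ZMod ℓ)) := hB.mul hC
  apply hu.mul_left_cancel
  have hZ : (k : ZMod ℓ) * (Nat.card A : ZMod ℓ) = (Nat.card B : ZMod ℓ) * (Nat.card C : ZMod ℓ) := by
    rw [← Nat.cast_mul, ← Nat.cast_mul, hcard]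
  calc (Nat.card B : ZMod ℓ) * (Nat.card C : ZMod ℓ) *
        ((Nat.card B : ZMod ℓ)⁻¹ * (Nat.card C : ZMod ℓ)⁻¹ * (k : ZMod ℓ))
      = ((Nat.card B : ZMod ℓ) * (Nat.card B : ZMod ℓ)⁻¹) *
        ((Nat.card C : ZMod ℓ) * (Nat.card C : ZMod ℓ)⁻¹) * (k : ZMod ℓ) := by ring
    _ = (k : ZMod ℓ) := by rw [ZMod.mul_inv_of_unit _ hB, ZMod.mul_inv_of_unit _ hC, one_mul, one_mul]
    _ = (k : ZMod ℓ) * ((Nat.card A : ZMod ℓ) * (Nat.card A : ZMod ℓ)⁻¹) := by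
        rw [ZMod.mul_inv_of_unit _ hA, mul_one]
    _ = (Nat.card B : ZMod ℓ) * (Nat.card C : ZMod ℓ) * (Nat.card A : ZMod ℓ)⁻¹ := by
        rw [← mul_assoc, hZ]

lemma hyperplane_eq_of_le {p : ℕ} (hp : p.Prime) {B K : AddSubgroup A}
    (hB : B.index = p) (hle : B ≤ K) (hK : K ≠ ⊤) : K = B := by
  have hdvd : K.index ∣ B.index := AddSubgroup.index_dvd_of_le hle
  rw [hB] at hdvd
  rcases (Nat.Prime.eq_one_or_self_of_dvd hp _ hdvd) with h1 | hKp
  · exact absurd (AddSubgroup.index_eq_one.mp h1) hK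
  · -- equal indices, so equal cards, so equal
    have hcB := AddSubgroup.card_mul_index B
    have hcK := AddSubgroup.card_mul_index K
    rw [hB] at hcB
    rw [hKp] at hcK
    have hcards : Nat.card K = Nat.card B := by
      have hp0 : 0 < p := hp.pos
      exact Nat.eq_of_mul_eq_mul_right hp0 (hcK.trans hcB.symm)
    exact (AddSubgroup.eq_of_le_of_card_ge hle hcards.le).symm

lemma hyperplane_sup_eq_top {p : ℕ} (hp : p.Prime) {B C : AddSubgroup A}
    (hB : B.index = p) (hC : C.index = p) (hne : B ≠ C) : B ⊔ C = ⊤ := by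
  by_contra hne'
  have h1 : B ⊔ C = B := hyperplane_eq_of_le hp hB le_sup_left hne'
  have h2 : B ⊔ C = C := hyperplane_eq_of_le hp hC le_sup_right hne'
  exact hne (h1.symm.trans h2)


end GA

section Counting
variable {p r : ℕ} [NeZero p]

local notation "AA" => (Fin r → ZMod p)
local notation "DD" => ((Fin r → ZMod p) →ₗ[ZMod p] ZMod p)

lemma surj_of_apply_ne (hp : p.Prime) (φ : DD) {x : Fin r → ZMod p} (hx : φ x ≠ 0) :
    Function.Surjective φ := by
  haveI := Fact.mk hp
  intro u
  refine ⟨(u * (φ x)⁻¹) • x, ?_⟩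
  rw [map_smul, smul_eq_mul, mul_assoc, inv_mul_cancel₀ hx, mul_one]

lemma ker_toAddSubgroup_eq (φ : DD) :
    (LinearMap.ker φ).toAddSubgroup = AddMonoidHom.ker (φ.toAddMonoidHom) := by
  ext x
  simp [AddMonoidHom.mem_ker, LinearMap.mem_ker]

lemma index_ker_eq (hp : p.Prime) (φ : DD) {x : Fin r → ZMod p} (hx : φ x ≠ 0) :
    (LinearMap.ker φ).toAddSubgroup.index = p := by
  rw [ker_toAddSubgroup_eq, AddSubgroup.index_ker,
    AddMonoidHom.range_eq_top.mpr (surj_of_apply_ne hp φ hx), AddSubgroup.card_top,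
    Nat.card_zmod]

lemma smul_p_eq_zero (x : Fin r → ZMod p) : p • x = 0 := by
  funext i
  show p • x i = 0
  rw [nsmul_eq_mul, ZMod.natCast_self, zero_mul]

/-- the set of functionals with kernel exactly a fixed hyperplane `B` has `p - 1` elements -/
lemma fiber_card (hp : p.Prime) {a : Fin r → ZMod p} {B : AddSubgroup (Fin r → ZMod p)}
    (hBp : B.index = p) (haB : a ∉ B) :
    Nat.card {φ : DD // (LinearMap.ker φ).toAddSubgroup = B} = p - 1 := by
  haveI := Fact.mk hp
  -- the quotient
  set π := QuotientAddGroup.mk' B with hπ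
  have hπa : π a ≠ 0 := by
    rw [hπ]
    exact
      fun h => haB ((QuotientAddGroup.eq_zero_iff a).mp h)
  have hcardQ : Nat.card ((Fin r → ZMod p) ⧸ B) = p := hBp
  -- ψ : ZMod p →+ Q
  have hfp : (zmultiplesHom _ (π a)) (p : ℤ) = 0 := by
    show (p : ℤ) • π a = 0
    rw [natCast_zsmul, ← map_nsmul, smul_p_eq_zero, map_zero]
  set ψ : ZMod p →+ (Fin r → ZMod p) ⧸ B := ZMod.lift p ⟨zmultiplesHom _ (π a), hfp⟩ with hψ
  have hψcoe : ∀ k : ℤ, ψ (k : ZMod p) = k • π a := fun k => ZMod.lift_coe p _ k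
  have hψ1 : ψ 1 = π a := by
    have := hψcoe 1
    rw [Int.cast_one] at this
    rw [this, one_zsmul]
  -- order of π a is p
  have hord : addOrderOf (π a) = p := by
    have hdvd : addOrderOf (π a) ∣ p := by
      have := addOrderOf_dvd_natCard (π a)
      rwa [hcardQ] at this
    rcases hp.eq_one_or_self_of_dvd _ hdvd with h1 | h
    · exact absurd (AddMonoid.addOrderOf_eq_one_iff.mp h1) hπa
    · exact h
  have hgen : AddSubgroup.zmultiples (π a) = ⊤ := by
    apply AddSubgroup.eq_top_of_card_eq
    rw [Nat.card_zmultiples, hord, hcardQ]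
  have hψsurj : Function.Surjective ψ := by
    intro q
    have : q ∈ AddSubgroup.zmultiples (π a) := hgen ▸ AddSubgroup.mem_top q
    obtain ⟨k, hk⟩ := AddSubgroup.mem_zmultiples_iff.mp this
    exact ⟨(k : ZMod p), by rw [hψcoe k, hk]⟩
  have hψbij : Function.Bijective ψ :=
    (Nat.bijective_iff_surjective_and_card ψ).mpr ⟨hψsurj, by rw [Nat.card_zmod, hcardQ]⟩
  set e : ZMod p ≃+ (Fin r → ZMod p) ⧸ B := AddEquiv.ofBijective ψ hψbij with he
  have hea : e.symm (π a) = 1 := by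
    rw [← hψ1]
    exact e.symm_apply_apply 1
  -- the bijection : φ ↦ φ a
  have hBsup : ∀ (K : AddSubgroup (Fin r → ZMod p)), B ≤ K → K ≠ ⊤ → K = B :=
    fun K hle hK => hyperplane_eq_of_le hp hBp hle hK
  set g : {φ : DD // (LinearMap.ker φ).toAddSubgroup = B} → {u : ZMod p // u ≠ 0} :=
    fun φ => ⟨φ.1 a, by
      intro h0
      apply haB
      have : a ∈ (LinearMap.ker φ.1).toAddSubgroup := by
        simpa [Submodule.mem_toAddSubgroup, LinearMap.mem_ker] using h0
      rwa [φ.2] at this⟩ with hg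
  have hsup : B ⊔ AddSubgroup.zmultiples a = ⊤ := by
    by_contra hS
    exact haB (hBsup _ le_sup_left hS ▸
      AddSubgroup.mem_sup_right (AddSubgroup.mem_zmultiples a))
  have hginj : Function.Injective g := by
    rintro ⟨φ, hφ⟩ ⟨χ, hχ⟩ hval
    have hval' : φ a = χ a := Subtype.ext_iff.mp hval
    apply Subtype.ext
    apply LinearMap.ext
    intro x
    have hx : x ∈ B ⊔ AddSubgroup.zmultiples a := hsup ▸ AddSubgroup.mem_top x
    obtain ⟨y, hy, z, hz, rfl⟩ := AddSubgroup.mem_sup.mp hx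
    obtain ⟨k, rfl⟩ := AddSubgroup.mem_zmultiples_iff.mp hz
    have hyφ : φ y = 0 := by
      have : y ∈ (LinearMap.ker φ).toAddSubgroup := hφ ▸ hy
      simpa [Submodule.mem_toAddSubgroup, LinearMap.mem_ker] using this
    have hyχ : χ y = 0 := by
      have : y ∈ (LinearMap.ker χ).toAddSubgroup := hχ ▸ hy
      simpa [Submodule.mem_toAddSubgroup, LinearMap.mem_ker] using this
    rw [map_add, map_add, hyφ, hyχ, map_zsmul, map_zsmul, hval']
  have hgsurj : Function.Surjective g := by
    rintro ⟨u, hu⟩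
    set φu : DD := AddMonoidHom.toZModLinearMap p
      ((AddMonoidHom.mulLeft u).comp ((e.symm : ((Fin r → ZMod p) ⧸ B) →+ ZMod p).comp
        (QuotientAddGroup.mk' B))) with hφu
    have hφuval : ∀ x : Fin r → ZMod p, φu x = u * e.symm (π x) := fun x => rfl
    have hφua : φu a = u := by rw [hφuval, hea, mul_one]
    have hBle : B ≤ (LinearMap.ker φu).toAddSubgroup := by
      intro b hb
      have hπb : π b = 0 := (QuotientAddGroup.eq_zero_iff b).mpr hb
      simp [Submodule.mem_toAddSubgroup, LinearMap.mem_ker, hφuval, hπb]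
    have hker : (LinearMap.ker φu).toAddSubgroup = B := by
      apply hBsup _ hBle
      intro htop
      have : a ∈ (LinearMap.ker φu).toAddSubgroup := htop ▸ AddSubgroup.mem_top a
      have : φu a = 0 := by
        simpa [Submodule.mem_toAddSubgroup, LinearMap.mem_ker] using this
      rw [hφua] at this
      exact hu this
    exact ⟨⟨φu, hker⟩, Subtype.ext hφua⟩
  have : Nat.card {φ : DD // (LinearMap.ker φ).toAddSubgroup = B}
      = Nat.card {u : ZMod p // u ≠ 0} :=
    Nat.card_congr (Equiv.ofBijective g ⟨hginj, hgsurj⟩)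
  rw [this]
  haveI : Fintype {u : ZMod p // u ≠ 0} := Fintype.ofFinite _
  classical
  rw [Nat.card_eq_fintype_card]
  calc Fintype.card {u : ZMod p // ¬ (u = 0)}
      = Fintype.card (ZMod p) - Fintype.card {u : ZMod p // u = 0} :=
        Fintype.card_subtype_compl _
    _ = p - 1 := by rw [ZMod.card, Fintype.card_subtype_eq]

end Counting

section Counting2
variable {p r : ℕ} [NeZero p]

local notation "DD" => ((Fin r → ZMod p) →ₗ[ZMod p] ZMod p)

lemma card_D : Nat.card DD = p ^ r := by
  classical
  have e := (LinearEquiv.piRing (ZMod p) (ZMod p) (Fin r) (ZMod p)).toEquiv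
  rw [Nat.card_congr e]
  simp [Nat.card_eq_fintype_card, ZMod.card]

lemma card_ker_ev (hp : p.Prime) {a : Fin r → ZMod p} (ha : a ≠ 0) :
    Nat.card {φ : DD // φ a = 0} = p ^ (r - 1) := by
  haveI := Fact.mk hp
  set ev : DD →+ ZMod p := AddMonoidHom.mk' (fun φ => φ a) (fun φ ψ => rfl) with hev
  have hev_apply : ∀ φ : DD, ev φ = φ a := fun φ => rfl
  obtain ⟨i, hi⟩ : ∃ i, a i ≠ 0 := Function.ne_iff.mp ha
  have hr : 0 < r := i.pos
  have hsurj : Function.Surjective ev := by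
    intro u
    refine ⟨(u * (a i)⁻¹) • LinearMap.proj i, ?_⟩
    rw [hev_apply, LinearMap.smul_apply, LinearMap.proj_apply, smul_eq_mul, mul_assoc,
      inv_mul_cancel₀ hi, mul_one]
  have hidx : (AddMonoidHom.ker ev).index = p := by
    rw [AddSubgroup.index_ker, AddMonoidHom.range_eq_top.mpr hsurj, AddSubgroup.card_top,
      Nat.card_zmod]
  have hcards := AddSubgroup.card_mul_index (AddMonoidHom.ker ev)
  rw [hidx, card_D] at hcards
  have heq : Nat.card {φ : DD // φ a = 0} = Nat.card (AddMonoidHom.ker ev) :=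
    Nat.card_congr (Equiv.subtypeEquivRight (fun φ => by
      rw [AddMonoidHom.mem_ker, hev_apply]))
  rw [heq]
  apply Nat.eq_of_mul_eq_mul_right hp.pos
  rw [hcards, ← pow_succ, Nat.sub_add_cancel hr]

lemma card_compl_ev (hp : p.Prime) {a : Fin r → ZMod p} (ha : a ≠ 0) :
    Nat.card {φ : DD // φ a ≠ 0} = p ^ (r - 1) * (p - 1) := by
  classical
  haveI : Finite DD := Finite.of_injective _ DFunLike.coe_injective
  haveI : Fintype DD := Fintype.ofFinite _
  obtain ⟨i, _⟩ : ∃ i, a i ≠ 0 := Function.ne_iff.mp ha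
  have hr : 0 < r := i.pos
  have h1 : Nat.card {φ : DD // φ a ≠ 0}
      = Fintype.card DD - Fintype.card {φ : DD // φ a = 0} := by
    rw [Nat.card_eq_fintype_card]
    exact Fintype.card_subtype_compl _
  rw [h1, ← Nat.card_eq_fintype_card, ← Nat.card_eq_fintype_card, card_D,
    card_ker_ev hp ha]
  have : p ^ r = p ^ (r - 1) * p := by rw [← pow_succ, Nat.sub_add_cancel hr]
  rw [this, Nat.mul_sub_one]

lemma card_hyperplanes_not_mem (hp : p.Prime) {a : Fin r → ZMod p} (ha : a ≠ 0) :
    Nat.card {B : AddSubgroup (Fin r → ZMod p) // B.index = p ∧ a ∉ B} = p ^ (r - 1) := by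
  classical
  haveI : Finite DD := Finite.of_injective _ DFunLike.coe_injective
  set T := {B : AddSubgroup (Fin r → ZMod p) // B.index = p ∧ a ∉ B} with hT
  haveI : Finite T := by
    haveI : Finite (AddSubgroup (Fin r → ZMod p)) := inferInstance
    exact Subtype.finite
  haveI : Fintype T := Fintype.ofFinite _
  set f : {φ : DD // φ a ≠ 0} → T := fun x =>
    ⟨(LinearMap.ker x.1).toAddSubgroup, index_ker_eq hp x.1 x.2, by
      intro hmem
      exact x.2 (by simpa [Submodule.mem_toAddSubgroup, LinearMap.mem_ker] using hmem)⟩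
    with hf
  -- fibers of f all have cardinality p - 1
  have hfib : ∀ B : T, Nat.card {x : {φ : DD // φ a ≠ 0} // f x = B} = p - 1 := by
    intro B
    have e1 : {x : {φ : DD // φ a ≠ 0} // f x = B}
        ≃ {x : {φ : DD // φ a ≠ 0} // (LinearMap.ker x.1).toAddSubgroup = B.1} :=
      Equiv.subtypeEquivRight (fun x => by
        constructor
        · intro h; exact congrArg Subtype.val h
        · intro h; exact Subtype.ext h)
    have e2 : {x : {φ : DD // φ a ≠ 0} // (LinearMap.ker x.1).toAddSubgroup = B.1}
        ≃ {φ : DD // φ a ≠ 0 ∧ (LinearMap.ker φ).toAddSubgroup = B.1} :=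
      Equiv.subtypeSubtypeEquivSubtypeInter (fun φ : DD => φ a ≠ 0)
        (fun φ : DD => (LinearMap.ker φ).toAddSubgroup = B.1)
    have e3 : {φ : DD // φ a ≠ 0 ∧ (LinearMap.ker φ).toAddSubgroup = B.1}
        ≃ {φ : DD // (LinearMap.ker φ).toAddSubgroup = B.1} :=
      Equiv.subtypeEquivRight (fun φ => by
        constructor
        · exact fun h => h.2
        · intro h
          refine ⟨?_, h⟩
          intro h0
          exact B.2.2 (h ▸ (by simpa [Submodule.mem_toAddSubgroup, LinearMap.mem_ker] using h0)))
    rw [Nat.card_congr ((e1.trans e2).trans e3)]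
    exact fiber_card hp B.2.1 B.2.2
  -- sum over fibers
  have hsig : Nat.card {φ : DD // φ a ≠ 0} = ∑ B : T, Nat.card {x // f x = B} := by
    haveI : Fintype {φ : DD // φ a ≠ 0} := Fintype.ofFinite _
    rw [← Nat.card_congr (Equiv.sigmaFiberEquiv f)]
    haveI : ∀ B : T, Fintype {x // f x = B} := fun B => Fintype.ofFinite _
    rw [Nat.card_eq_fintype_card, Fintype.card_sigma]
    exact Finset.sum_congr rfl (fun B _ => (Nat.card_eq_fintype_card).symm)
  rw [card_compl_ev hp ha] at hsig
  have hsig2 : p ^ (r - 1) * (p - 1) = Nat.card T * (p - 1) := by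
    rw [hsig]
    simp only [hfib, Finset.sum_const, Finset.card_univ, smul_eq_mul]
    rw [← Nat.card_eq_fintype_card]
  have hp1 : 0 < p - 1 := by have := hp.two_le; omega
  exact (Nat.eq_of_mul_eq_mul_right hp1 hsig2).symm

end Counting2

noncomputable instance (p r : ℕ) :
    DecidableEq {B : AddSubgroup (Fin r → ZMod p) // B.index = p} :=
  Classical.decEq _

/-- For `A = (ℤ/pℤ)^r` elementary abelian, `ℓ` coprime to `p`, and a
`(ℤ/ℓℤ)[A]`-module `M` with trivial coinvariants (`I_A · M = M`), the module `M`
is the internal direct sum of the submodules `ε_i M` over the index-`p`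
subgroups `A_i`. -/
theorem module_decomposition (p ℓ r : ℕ) [NeZero p] (hp : p.Prime) (hℓ : 0 < ℓ)
    (hcop : ℓ.Coprime p) (M : Type)
    [AddCommGroup M] [Module (AddMonoidAlgebra (ZMod ℓ) (Fin r → ZMod p)) M]
    (hfaithful : (augIdeal ℓ (Fin r → ZMod p)) •
      (⊤ : Submodule (AddMonoidAlgebra (ZMod ℓ) (Fin r → ZMod p)) M) = ⊤) :
    DirectSum.IsInternal
      (fun B : {B : AddSubgroup (Fin r → ZMod p) // B.index = p} =>
        LinearMap.range
          (LinearMap.lsmul (AddMonoidAlgebra (ZMod ℓ) (Fin r → ZMod p)) M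
            (eps ℓ B.1))) := by
  classical
  haveI : NeZero ℓ := ⟨hℓ.ne'⟩
  set A := Fin r → ZMod p with hA
  set R := AddMonoidAlgebra (ZMod ℓ) A with hR
  set ι := {B : AddSubgroup A // B.index = p} with hι
  haveI : Fintype ι := Fintype.ofFinite _
  set V : ι → Submodule R M := fun i =>
    LinearMap.range (LinearMap.lsmul R M (eps ℓ i.1)) with hV
  -- cardinalities are units
  have hcardA : Nat.card A = p ^ r := by
    simp [hA, Nat.card_eq_fintype_card, ZMod.card]
  have hunit : ∀ B : AddSubgroup A, IsUnit ((Nat.card B : ZMod ℓ)) := by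
    intro B
    rw [ZMod.isUnit_iff_coprime]
    have hdvd : Nat.card B ∣ p ^ r :=
      hcardA ▸ ⟨B.index, (AddSubgroup.card_mul_index B).symm⟩
    exact Nat.Coprime.coprime_dvd_left hdvd (hcop.symm.pow_left r)
  have hAu : IsUnit ((Nat.card A : ZMod ℓ)) := by
    have := hunit ⊤
    rwa [AddSubgroup.card_top] at this
  -- ε_⊤ annihilates the augmentation ideal
  have htopmul : ∀ x ∈ augIdeal ℓ A, eps ℓ (⊤ : AddSubgroup A) * x = 0 := by
    intro x hx
    refine Submodule.span_induction ?_ ?_ ?_ ?_ hx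
    · rintro _ ⟨σ, rfl⟩
      rw [mul_sub, mul_one]
      have : eps ℓ (⊤ : AddSubgroup A) * AddMonoidAlgebra.single σ 1
          = eps ℓ (⊤ : AddSubgroup A) := by
        rw [eps_eq, smul_mul_assoc, mul_comm (gsum ℓ ⊤), single_mul_gsum ⊤ (AddSubgroup.mem_top σ)]
      rw [this, sub_self]
    · rw [mul_zero]
    · intro x y _ _ hx hy
      rw [mul_add, hx, hy, add_zero]
    · intro c x _ hx
      rw [mul_smul_comm, hx, smul_zero]
  -- hence ε_⊤ annihilates M
  have htop : ∀ m : M, eps ℓ (⊤ : AddSubgroup A) • m = 0 := by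
    intro m
    have hm : m ∈ (augIdeal ℓ A) • (⊤ : Submodule R M) := by
      rw [hfaithful]; exact Submodule.mem_top
    refine Submodule.smul_induction_on hm ?_ ?_
    · intro c hc n _
      rw [smul_smul, htopmul c hc, zero_smul]
    · intro x y hx hy
      rw [smul_add, hx, hy, add_zero]
  -- the full sum of group elements annihilates M
  haveI : Fintype A := Fintype.ofFinite _
  set T := ∑ a : A, AddMonoidAlgebra.single a (1 : ZMod ℓ) with hT
  have hTg : T = gsum ℓ (⊤ : AddSubgroup A) := (gsum_top).symm
  have hTeps : T = AddMonoidAlgebra.single (0 : A) ((Nat.card A : ZMod ℓ))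
      * eps ℓ (⊤ : AddSubgroup A) := by
    rw [single_zero_mul, eps_eq, AddSubgroup.card_top, smul_smul,
      ZMod.mul_inv_of_unit _ hAu, one_smul, hTg]
  have hTm : ∀ m : M, T • m = 0 := by
    intro m
    rw [hTeps, mul_smul, htop, smul_zero]
  -- cardinality of hyperplanes
  have hcardB : ∀ i : ι, Nat.card i.1 = p ^ (r - 1) := by
    intro i
    have h := AddSubgroup.card_mul_index i.1
    rw [i.2, hcardA] at h
    have hr : 0 < r := by
      rcases Nat.eq_zero_or_pos r with h0 | h0
      · exfalso
        obtain ⟨k, hk⟩ : ∃ k, k * p = p ^ r := ⟨_, h⟩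
        rw [h0, pow_zero] at hk
        have h2 := hp.two_le
        have : p ≤ 1 := Nat.le_of_dvd one_pos ⟨k, by rw [← hk]; ring⟩
        omega
      · exact h0
    apply Nat.eq_of_mul_eq_mul_right hp.pos
    rw [h, ← pow_succ, Nat.sub_add_cancel hr]
  -- the scalar
  set u := ((p ^ (r - 1) : ℕ) : ZMod ℓ)⁻¹ with hu_def
  have hu : IsUnit ((p ^ (r - 1) : ℕ) : ZMod ℓ) := by
    rw [ZMod.isUnit_iff_coprime]
    exact hcop.symm.pow_left _
  set c := (Fintype.card ι : ZMod ℓ) * u - 1 with hc_def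
  -- the key sum identity
  have hsum : ∑ i : ι, eps ℓ i.1 = 1 + AddMonoidAlgebra.single (0 : A) c * T := by
    rw [single_zero_mul]
    apply AddMonoidAlgebra.ext
    apply Finsupp.ext
    intro a
    rw [AddMonoidAlgebra.coeff_sum, Finsupp.finset_sum_apply]
    have heps : ∀ i : ι, (eps ℓ i.1).coeff a = if a ∈ i.1 then u else 0 := by
      intro i
      rw [eps_eq, AddMonoidAlgebra.coeff_smul_apply, hcardB i]
      by_cases h : a ∈ i.1
      · rw [gsum_apply_mem _ h, if_pos h, smul_eq_mul, mul_one]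
      · rw [gsum_apply_not_mem _ h, if_neg h, smul_eq_mul, mul_zero]
    rw [Finset.sum_congr rfl (fun i _ => heps i)]
    have hTa : T.coeff a = 1 := by
      rw [hTg]
      exact gsum_apply_mem _ (AddSubgroup.mem_top a)
    rw [AddMonoidAlgebra.coeff_add, Finsupp.add_apply, AddMonoidAlgebra.coeff_smul_apply, hTa, smul_eq_mul, mul_one,
      AddMonoidAlgebra.one_def, AddMonoidAlgebra.coeff_single_apply,
      Finset.sum_ite, Finset.sum_const, Finset.sum_const_zero, add_zero]
    by_cases ha : a = 0
    · subst ha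
      rw [Finset.filter_true_of_mem (fun i _ => zero_mem _), if_pos rfl, Finset.card_univ,
        hc_def, nsmul_eq_mul]
      ring
    · rw [if_neg (fun h => ha h.symm)]
      have h2 : (Finset.univ.filter fun i : ι => a ∉ i.1).card = p ^ (r - 1) := by
        rw [← Fintype.card_subtype]
        have e : {i : ι // a ∉ i.1} ≃ {B : AddSubgroup A // B.index = p ∧ a ∉ B} :=
          Equiv.subtypeSubtypeEquivSubtypeInter
            (fun B : AddSubgroup A => B.index = p) (fun B => a ∉ B)
        rw [← Nat.card_eq_fintype_card, Nat.card_congr e]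
        exact card_hyperplanes_not_mem hp ha
      have h1 : (Finset.univ.filter fun i : ι => a ∈ i.1).card + p ^ (r - 1)
          = Fintype.card ι := by
        rw [← h2]
        exact Finset.card_filter_add_card_filter_not _
      have hNcast : (Fintype.card ι : ZMod ℓ)
          = ((Finset.univ.filter fun i : ι => a ∈ i.1).card : ZMod ℓ)
            + ((p ^ (r - 1) : ℕ) : ZMod ℓ) := by
        rw [← h1]
        push_cast
        ring
      rw [nsmul_eq_mul, zero_add, hc_def, hNcast]
      have hu1 : ((p ^ (r - 1) : ℕ) : ZMod ℓ) * u = 1 := ZMod.mul_inv_of_unit _ hu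
      calc ((Finset.univ.filter fun i : ι => a ∈ i.1).card : ZMod ℓ) * u
          = ((Finset.univ.filter fun i : ι => a ∈ i.1).card : ZMod ℓ) * u
            + (((p ^ (r - 1) : ℕ) : ZMod ℓ) * u - 1) := by rw [hu1]; ring
        _ = (((Finset.univ.filter fun i : ι => a ∈ i.1).card : ZMod ℓ)
            + ((p ^ (r - 1) : ℕ) : ZMod ℓ)) * u - 1 := by ring
  -- action of the sum is the identity
  have hone : ∀ m : M, (∑ i : ι, eps ℓ i.1) • m = m := by
    intro m
    rw [hsum, add_smul, one_smul, mul_smul, hTm, smul_zero, add_zero]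
  -- orthogonality
  have horth : ∀ i j : ι, i ≠ j → eps ℓ i.1 * eps ℓ j.1 = eps ℓ (⊤ : AddSubgroup A) := by
    intro i j hij
    exact eps_mul_eps_of_sup_eq_top
      (hyperplane_sup_eq_top hp i.2 j.2 (fun h => hij (Subtype.ext h)))
      (hunit _) (hunit _) hAu
  have hidem : ∀ i : ι, eps ℓ i.1 * eps ℓ i.1 = eps ℓ i.1 := fun i =>
    eps_mul_eps_self _ (hunit _)
  -- conclude
  rw [DirectSum.isInternal_submodule_iff_iSupIndep_and_iSup_eq_top]
  constructor
  · rw [iSupIndep_def]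
    intro i
    rw [Submodule.disjoint_def]
    intro x hxi hxs
    obtain ⟨m, rfl⟩ := hxi
    have hle : (⨆ j, ⨆ (_ : j ≠ i), V j)
        ≤ LinearMap.ker (LinearMap.lsmul R M (eps ℓ i.1)) := by
      refine iSup_le fun j => iSup_le fun hj => ?_
      rintro y ⟨n, rfl⟩
      show eps ℓ i.1 • (eps ℓ j.1 • n) = 0
      rw [smul_smul, horth i j (Ne.symm hj), htop]
    have h0 : eps ℓ i.1 • ((LinearMap.lsmul R M (eps ℓ i.1)) m) = 0 := hle hxs
    have h1 : eps ℓ i.1 • ((LinearMap.lsmul R M (eps ℓ i.1)) m)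
        = (LinearMap.lsmul R M (eps ℓ i.1)) m := by
      show eps ℓ i.1 • (eps ℓ i.1 • m) = eps ℓ i.1 • m
      rw [smul_smul, hidem i]
    rw [← h1, h0]
  · rw [eq_top_iff]
    intro m _
    rw [← hone m, Finset.sum_smul]
    exact Submodule.sum_mem _ (fun i _ => Submodule.mem_iSup_of_mem i ⟨m, rfl⟩)
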